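/- arXiv:1210.2202 — 2 statements merged into one kernel-verified Lean document; each statement's English description precedes it below -/
import Mathlib

section
/- For every ρ with 0 < ρ < π, the map F(τ, v, u) = (e^{τ sin v} cos(τ cos v), e^{τ sin v} sin(τ cos v) cos u, e^{τ sin v} sin(τ cos v) sin u) is injective on the domain (0, ρ] × (−π/2, π/2) × (−π, π]. -/
open Real

/-- The geodesic polar coordinate map of `S² × ℝ` around `(1,0,0)` in the Euclidean
model: `F(τ, v, u)` with radial parameter `τ`, altitude `v` and longitude `u`. -/
noncomputable def Fpolar (p : ℝ × ℝ × ℝ) : ℝ × ℝ × ℝ :=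
  (Real.exp (p.1 * Real.sin p.2.1) * Real.cos (p.1 * Real.cos p.2.1),
   Real.exp (p.1 * Real.sin p.2.1) * Real.sin (p.1 * Real.cos p.2.1) * Real.cos p.2.2,
   Real.exp (p.1 * Real.sin p.2.1) * Real.sin (p.1 * Real.cos p.2.1) * Real.sin p.2.2)

lemma angle_eq_of_cos_sin {u u' : ℝ} (hu : u ∈ Set.Ioc (-π) π) (hu' : u' ∈ Set.Ioc (-π) π)
    (hc : Real.cos u = Real.cos u') (hs : Real.sin u = Real.sin u') : u = u' := by
  have := Complex.arg_cos_add_sin_mul_I hu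
  have h2 := Complex.arg_cos_add_sin_mul_I hu'
  rw [← this, ← h2, ← Complex.ofReal_cos, ← Complex.ofReal_sin,
    ← Complex.ofReal_cos u', ← Complex.ofReal_sin u', hc, hs]

/-- For `0 < ρ < π` the geodesic polar coordinate map `F` is injective on
`(0, ρ] × (−π/2, π/2) × (−π, π]` (this justifies the change of variables in the
volume formula of Theorem 2.4). -/
theorem polar_injOn (ρ : ℝ) (h0 : 0 < ρ) (hπ : ρ < π) :
    Set.InjOn Fpolar
      (Set.Ioc 0 ρ ×ˢ Set.Ioo (-(π / 2)) (π / 2) ×ˢ Set.Ioc (-π) π) := by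
  rintro ⟨τ, v, u⟩ ⟨hτ, hv, hu⟩ ⟨τ', v', u'⟩ ⟨hτ', hv', hu'⟩ heq
  simp only [Set.mem_Ioc, Set.mem_Ioo] at hτ hv hu hτ' hv' hu'
  have h1 := congrArg Prod.fst heq
  have h2 := congrArg (fun p => p.2.1) heq
  have h3 := congrArg (fun p => p.2.2) heq
  simp only [Fpolar] at h1 h2 h3
  -- abbreviations
  set a := Real.exp (τ * Real.sin v) with ha
  set a' := Real.exp (τ' * Real.sin v') with ha'
  have hapos : 0 < a := Real.exp_pos _
  have hapos' : 0 < a' := Real.exp_pos _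
  have hθ : τ * Real.cos v ∈ Set.Ioo 0 π := by
    constructor
    · exact mul_pos hτ.1 (Real.cos_pos_of_mem_Ioo hv)
    · calc τ * Real.cos v ≤ τ * 1 := by
            have := Real.cos_le_one v
            nlinarith [hτ.1]
          _ ≤ ρ := by linarith [hτ.2]
          _ < π := hπ
  have hθ' : τ' * Real.cos v' ∈ Set.Ioo 0 π := by
    constructor
    · exact mul_pos hτ'.1 (Real.cos_pos_of_mem_Ioo hv')
    · calc τ' * Real.cos v' ≤ τ' * 1 := by
            have := Real.cos_le_one v'
            nlinarith [hτ'.1]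
          _ ≤ ρ := by linarith [hτ'.2]
          _ < π := hπ
  have hsinθ : 0 < Real.sin (τ * Real.cos v) := Real.sin_pos_of_pos_of_lt_pi hθ.1 hθ.2
  have hsinθ' : 0 < Real.sin (τ' * Real.cos v') := Real.sin_pos_of_pos_of_lt_pi hθ'.1 hθ'.2
  -- norms are equal: a = a'
  have key : ∀ b θ w : ℝ, (b * Real.cos θ) ^ 2 + (b * Real.sin θ * Real.cos w) ^ 2
      + (b * Real.sin θ * Real.sin w) ^ 2 = b ^ 2 := by
    intro b θ w
    linear_combination (b ^ 2 * Real.sin θ ^ 2) * Real.sin_sq_add_cos_sq w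
      + b ^ 2 * Real.sin_sq_add_cos_sq θ
  have hnorm : a ^ 2 = a' ^ 2 := by
    rw [← key a (τ * Real.cos v) u, ← key a' (τ' * Real.cos v') u', h1, h2, h3]
  have haa : a = a' := (sq_eq_sq₀ hapos.le hapos'.le).mp hnorm
  have hts : τ * Real.sin v = τ' * Real.sin v' := Real.exp_injective (ha ▸ ha' ▸ haa)
  -- cos θ = cos θ'
  have hcosθ : Real.cos (τ * Real.cos v) = Real.cos (τ' * Real.cos v') := by
    have := h1; rw [haa] at this
    exact mul_left_cancel₀ (ne_of_gt hapos') this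
  -- sin θ = sin θ'
  have hsinθeq : Real.sin (τ * Real.cos v) = Real.sin (τ' * Real.cos v') := by
    have hsq : Real.sin (τ * Real.cos v) ^ 2 = Real.sin (τ' * Real.cos v') ^ 2 := by
      linear_combination Real.sin_sq_add_cos_sq (τ * Real.cos v)
        - Real.sin_sq_add_cos_sq (τ' * Real.cos v')
        - (Real.cos (τ * Real.cos v) + Real.cos (τ' * Real.cos v')) * hcosθ
    exact (sq_eq_sq₀ hsinθ.le hsinθ'.le).mp hsq
  -- θ = θ'
  have hθeq : τ * Real.cos v = τ' * Real.cos v' :=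
    Real.injOn_cos (Set.mem_Icc.2 ⟨hθ.1.le, hθ.2.le⟩)
      (Set.mem_Icc.2 ⟨hθ'.1.le, hθ'.2.le⟩) hcosθ
  -- τ = τ'
  have hττ : τ = τ' := by
    have : τ^2 = τ'^2 := by
      linear_combination (τ * Real.sin v + τ' * Real.sin v') * hts
        + (τ * Real.cos v + τ' * Real.cos v') * hθeq
        - τ ^ 2 * Real.sin_sq_add_cos_sq v + τ' ^ 2 * Real.sin_sq_add_cos_sq v'
    exact (sq_eq_sq₀ hτ.1.le hτ'.1.le).mp this
  -- v = v'
  have hvv : v = v' := by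
    apply Real.injOn_sin (Set.mem_Icc.2 ⟨hv.1.le, hv.2.le⟩) (Set.mem_Icc.2 ⟨hv'.1.le, hv'.2.le⟩)
    have := hts; rw [hττ] at this
    exact mul_left_cancel₀ (ne_of_gt (hττ ▸ hτ.1)) this
  -- u = u'
  have hcu : Real.cos u = Real.cos u' := by
    have := h2; rw [haa, hsinθeq] at this
    exact mul_left_cancel₀ (by positivity) this
  have hsu : Real.sin u = Real.sin u' := by
    have := h3; rw [haa, hsinθeq] at this
    exact mul_left_cancel₀ (by positivity) this
  have huu : u = u' := angle_eq_of_cos_sin hu hu' hcu hsu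
  simp [hττ, hvv, huu]
end

section
/- Let 0 < ρ < π and let B_ρ ⊂ ℝ³ be the image of [0, ρ] × [−π/2, π/2] × (−π, π] under the map F(τ, v, u) = (e^{τ sin v} cos(τ cos v), e^{τ sin v} sin(τ cos v) cos u, e^{τ sin v} sin(τ cos v) sin u). Then the Lebesgue integral of (x² + y² + z²)^{−3/2} over B_ρ equals 2π ∫₀^ρ ∫_{−π/2}^{π/2} τ · sin(τ cos v) dv dτ. (Theorem 2.4: volume of the geodesic ball of radius ρ in S²×ℝ.) -/
open Real MeasureTheory

/-- Linear equivalence `ℝ×ℝ×ℝ ≃ Fin 3 → ℝ`. -/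
noncomputable def eLin : (ℝ × ℝ × ℝ) ≃ₗ[ℝ] (Fin 3 → ℝ) where
  toFun p := ![p.1, p.2.1, p.2.2]
  invFun f := (f 0, f 1, f 2)
  map_add' p q := by funext i; fin_cases i <;> simp
  map_smul' c p := by funext i; fin_cases i <;> simp
  left_inv p := by simp
  right_inv f := by funext i; fin_cases i <;> simp

noncomputable def bas3 : Module.Basis (Fin 3) ℝ (ℝ × ℝ × ℝ) :=
  (Pi.basisFun ℝ (Fin 3)).map eLin.symm


noncomputable def pr1 : (ℝ × ℝ × ℝ) →L[ℝ] ℝ := ContinuousLinearMap.fst ℝ ℝ (ℝ × ℝ)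
noncomputable def pr2 : (ℝ × ℝ × ℝ) →L[ℝ] ℝ :=
  (ContinuousLinearMap.fst ℝ ℝ ℝ).comp (ContinuousLinearMap.snd ℝ ℝ (ℝ × ℝ))
noncomputable def pr3 : (ℝ × ℝ × ℝ) →L[ℝ] ℝ :=
  (ContinuousLinearMap.snd ℝ ℝ ℝ).comp (ContinuousLinearMap.snd ℝ ℝ (ℝ × ℝ))


/-- derivative pieces -/
noncomputable def Dt (p : ℝ × ℝ × ℝ) : (ℝ × ℝ × ℝ) →L[ℝ] ℝ :=
  p.1 • (Real.cos p.2.1 • pr2) + Real.sin p.2.1 • pr1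
noncomputable def Da (p : ℝ × ℝ × ℝ) : (ℝ × ℝ × ℝ) →L[ℝ] ℝ :=
  p.1 • (-Real.sin p.2.1 • pr2) + Real.cos p.2.1 • pr1
noncomputable def DE (p : ℝ × ℝ × ℝ) : (ℝ × ℝ × ℝ) →L[ℝ] ℝ :=
  Real.exp (p.1 * Real.sin p.2.1) • Dt p
noncomputable def DES (p : ℝ × ℝ × ℝ) : (ℝ × ℝ × ℝ) →L[ℝ] ℝ :=
  Real.exp (p.1 * Real.sin p.2.1) • (Real.cos (p.1 * Real.cos p.2.1) • Da p) +
    Real.sin (p.1 * Real.cos p.2.1) • DE p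

noncomputable def Fder (p : ℝ × ℝ × ℝ) : (ℝ × ℝ × ℝ) →L[ℝ] (ℝ × ℝ × ℝ) :=
  (Real.exp (p.1 * Real.sin p.2.1) • (-Real.sin (p.1 * Real.cos p.2.1) • Da p) +
      Real.cos (p.1 * Real.cos p.2.1) • DE p).prod
    (((Real.exp (p.1 * Real.sin p.2.1) * Real.sin (p.1 * Real.cos p.2.1)) •
        (-Real.sin p.2.2 • pr3) + Real.cos p.2.2 • DES p).prod
      ((Real.exp (p.1 * Real.sin p.2.1) * Real.sin (p.1 * Real.cos p.2.1)) •
        (Real.cos p.2.2 • pr3) + Real.sin p.2.2 • DES p))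

lemma hasFDerivAt_Fpolar (p : ℝ × ℝ × ℝ) : HasFDerivAt Fpolar (Fder p) p := by
  have h1 : HasFDerivAt (fun q : ℝ × ℝ × ℝ => q.1) pr1 p := hasFDerivAt_fst
  have h2 : HasFDerivAt (fun q : ℝ × ℝ × ℝ => q.2.1) pr2 p :=
    hasFDerivAt_fst.comp p hasFDerivAt_snd
  have h3 : HasFDerivAt (fun q : ℝ × ℝ × ℝ => q.2.2) pr3 p :=
    hasFDerivAt_snd.comp p hasFDerivAt_snd
  have ht : HasFDerivAt (fun q : ℝ × ℝ × ℝ => q.1 * Real.sin q.2.1) (Dt p) p :=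
    h1.mul h2.sin
  have ha : HasFDerivAt (fun q : ℝ × ℝ × ℝ => q.1 * Real.cos q.2.1) (Da p) p :=
    h1.mul h2.cos
  have hE : HasFDerivAt (fun q : ℝ × ℝ × ℝ => Real.exp (q.1 * Real.sin q.2.1)) (DE p) p :=
    ht.exp
  have hES : HasFDerivAt (fun q : ℝ × ℝ × ℝ =>
      Real.exp (q.1 * Real.sin q.2.1) * Real.sin (q.1 * Real.cos q.2.1)) (DES p) p :=
    hE.mul ha.sin
  exact (hE.mul ha.cos).prodMk ((hES.mul h3.cos).prodMk (hES.mul h3.sin))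

lemma det_clm3 (L : (ℝ × ℝ × ℝ) →L[ℝ] (ℝ × ℝ × ℝ)) :
    L.det =
      (L (1,0,0)).1 * ((L (0,1,0)).2.1 * (L (0,0,1)).2.2 - (L (0,0,1)).2.1 * (L (0,1,0)).2.2)
      - (L (0,1,0)).1 * ((L (1,0,0)).2.1 * (L (0,0,1)).2.2 - (L (0,0,1)).2.1 * (L (1,0,0)).2.2)
      + (L (0,0,1)).1 * ((L (1,0,0)).2.1 * (L (0,1,0)).2.2 - (L (0,1,0)).2.1 * (L (1,0,0)).2.2) := by
  classical
  have h : L.det = LinearMap.det (L : (ℝ×ℝ×ℝ) →ₗ[ℝ] (ℝ×ℝ×ℝ)) := rfl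
  rw [h, ← LinearMap.det_toMatrix bas3]
  have hb : ∀ j : Fin 3, bas3 j = eLin.symm (Pi.basisFun ℝ (Fin 3) j) := by
    intro j; simp [bas3, Module.Basis.map_apply]
  have hrepr : ∀ (x : ℝ×ℝ×ℝ) (i : Fin 3), bas3.repr x i = eLin x i := by
    intro x i
    simp [bas3, Module.Basis.map_repr, Pi.basisFun_repr]
  have hm : ∀ i j, LinearMap.toMatrix bas3 bas3 (L : (ℝ×ℝ×ℝ) →ₗ[ℝ] (ℝ×ℝ×ℝ)) i j
      = eLin (L (eLin.symm (Pi.basisFun ℝ (Fin 3) j))) i := by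
    intro i j
    rw [LinearMap.toMatrix_apply, hrepr, hb]
    rfl
  rw [Matrix.det_fin_three]
  simp only [hm]
  have e0 : eLin.symm (Pi.basisFun ℝ (Fin 3) 0) = ((1:ℝ),(0:ℝ),(0:ℝ)) := by
    simp [eLin, Pi.basisFun_apply]
  have e1 : eLin.symm (Pi.basisFun ℝ (Fin 3) 1) = ((0:ℝ),(1:ℝ),(0:ℝ)) := by
    simp [eLin, Pi.basisFun_apply]
  have e2 : eLin.symm (Pi.basisFun ℝ (Fin 3) 2) = ((0:ℝ),(0:ℝ),(1:ℝ)) := by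
    simp [eLin, Pi.basisFun_apply]
  rw [e0, e1, e2]
  simp only [eLin]
  norm_num [Matrix.cons_val_zero, Matrix.cons_val_one, Matrix.head_cons, Matrix.cons_val_two, Matrix.tail_cons]
  ring

lemma Fder_det (p : ℝ × ℝ × ℝ) :
    (Fder p).det = -(p.1 * Real.exp (p.1 * Real.sin p.2.1) ^ 3 *
      Real.sin (p.1 * Real.cos p.2.1)) := by
  rw [det_clm3]
  have hu := Real.sin_sq_add_cos_sq p.2.2
  have hv := Real.sin_sq_add_cos_sq p.2.1
  have hA := Real.sin_sq_add_cos_sq (p.1 * Real.cos p.2.1)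
  set τ := p.1
  set E := Real.exp (p.1 * Real.sin p.2.1)
  set su := Real.sin p.2.2
  set cu := Real.cos p.2.2
  set sv := Real.sin p.2.1
  set cv := Real.cos p.2.1
  set sA := Real.sin (p.1 * Real.cos p.2.1)
  set cA := Real.cos (p.1 * Real.cos p.2.1)
  simp only [Fder, DES, DE, Da, Dt, pr1, pr2, pr3, ContinuousLinearMap.prod_apply,
    ContinuousLinearMap.add_apply, ContinuousLinearMap.coe_smul', Pi.smul_apply,
    ContinuousLinearMap.coe_comp', Function.comp_apply, ContinuousLinearMap.coe_fst',
    ContinuousLinearMap.coe_snd', smul_eq_mul, Matrix.det_fin_three,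
    Matrix.cons_val', Matrix.cons_val_zero, Matrix.cons_val_one, Matrix.head_cons,
    Matrix.empty_val', Matrix.cons_val_fin_one, Matrix.head_fin_const]
  linear_combination (-(τ*E^3*sA*cA^2) - τ*E^3*sA^3) * ((cv^2+sv^2) * hu + hv) +
    (-(τ*E^3*sA)) * hA



lemma Fpolar_normsq (p : ℝ × ℝ × ℝ) :
    (Fpolar p).1 ^ 2 + (Fpolar p).2.1 ^ 2 + (Fpolar p).2.2 ^ 2
      = Real.exp (2 * (p.1 * Real.sin p.2.1)) := by
  have hu := Real.sin_sq_add_cos_sq p.2.2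
  have hA := Real.sin_sq_add_cos_sq (p.1 * Real.cos p.2.1)
  have hE : Real.exp (2 * (p.1 * Real.sin p.2.1)) = Real.exp (p.1 * Real.sin p.2.1) ^ 2 := by
    rw [two_mul, Real.exp_add]; ring
  rw [hE]
  simp only [Fpolar]
  linear_combination (Real.exp (p.1 * Real.sin p.2.1) ^ 2 *
      Real.sin (p.1 * Real.cos p.2.1) ^ 2) * hu + Real.exp (p.1 * Real.sin p.2.1) ^ 2 * hA

lemma injOn_Fpolar {ρ : ℝ} (hπ : ρ < π) :
    Set.InjOn Fpolar (Set.Ioo 0 ρ ×ˢ Set.Ioo (-(π / 2)) (π / 2) ×ˢ Set.Ioo (-π) π) := by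
  rintro ⟨τ₁, v₁, u₁⟩ ⟨hτ₁, hv₁, hu₁⟩ ⟨τ₂, v₂, u₂⟩ ⟨hτ₂, hv₂, hu₂⟩ h
  simp only [Set.mem_Ioo] at hτ₁ hv₁ hu₁ hτ₂ hv₂ hu₂
  have hc1 : 0 < Real.cos v₁ := Real.cos_pos_of_mem_Ioo ⟨hv₁.1, hv₁.2⟩
  have hc2 : 0 < Real.cos v₂ := Real.cos_pos_of_mem_Ioo ⟨hv₂.1, hv₂.2⟩
  have ha1 : τ₁ * Real.cos v₁ ∈ Set.Ioo 0 π := by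
    constructor
    · exact mul_pos hτ₁.1 hc1
    · calc τ₁ * Real.cos v₁ ≤ τ₁ * 1 := by
            exact mul_le_mul_of_nonneg_left (Real.cos_le_one _) hτ₁.1.le
      _ < π := by linarith [hτ₁.2]
  have ha2 : τ₂ * Real.cos v₂ ∈ Set.Ioo 0 π := by
    constructor
    · exact mul_pos hτ₂.1 hc2
    · calc τ₂ * Real.cos v₂ ≤ τ₂ * 1 := by
            exact mul_le_mul_of_nonneg_left (Real.cos_le_one _) hτ₂.1.le
      _ < π := by linarith [hτ₂.2]
  -- equal t's
  have hnorm := congrArg (fun q : ℝ × ℝ × ℝ => q.1 ^ 2 + q.2.1 ^ 2 + q.2.2 ^ 2) h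
  rw [Fpolar_normsq (τ₁, v₁, u₁), Fpolar_normsq (τ₂, v₂, u₂)] at hnorm
  have ht : τ₁ * Real.sin v₁ = τ₂ * Real.sin v₂ := by
    have := Real.exp_injective hnorm; linarith
  have hE : Real.exp (τ₁ * Real.sin v₁) = Real.exp (τ₂ * Real.sin v₂) := by rw [ht]
  have hEpos : 0 < Real.exp (τ₁ * Real.sin v₁) := Real.exp_pos _
  have h1 := congrArg Prod.fst h
  have h2 := congrArg (fun q : ℝ × ℝ × ℝ => q.2.1) h
  have h3 := congrArg (fun q : ℝ × ℝ × ℝ => q.2.2) h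
  simp only [Fpolar] at h1 h2 h3
  -- cos of radial arguments equal
  have hC : Real.cos (τ₁ * Real.cos v₁) = Real.cos (τ₂ * Real.cos v₂) := by
    rw [hE] at h1
    exact mul_left_cancel₀ (Real.exp_pos _).ne' h1
  have hA : τ₁ * Real.cos v₁ = τ₂ * Real.cos v₂ :=
    Real.injOn_cos (Set.mem_Icc_of_Ioo ha1) (Set.mem_Icc_of_Ioo ha2) hC
  -- radii equal
  have hτsq : τ₁ ^ 2 = τ₂ ^ 2 := by
    have e1 : τ₁ ^ 2 = (τ₁ * Real.sin v₁) ^ 2 + (τ₁ * Real.cos v₁) ^ 2 := by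
      linear_combination (-(τ₁^2)) * Real.sin_sq_add_cos_sq v₁
    have e2 : τ₂ ^ 2 = (τ₂ * Real.sin v₂) ^ 2 + (τ₂ * Real.cos v₂) ^ 2 := by
      linear_combination (-(τ₂^2)) * Real.sin_sq_add_cos_sq v₂
    rw [e1, e2, ht, hA]
  have hττ : τ₁ = τ₂ := by
    have := Real.sqrt_sq hτ₁.1.le
    rw [← Real.sqrt_sq hτ₁.1.le, ← Real.sqrt_sq hτ₂.1.le, hτsq]
  subst hττ
  have hτne : τ₁ ≠ 0 := hτ₁.1.ne'
  -- v equal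
  have hsinv : Real.sin v₁ = Real.sin v₂ := by
    exact mul_left_cancel₀ hτne ht
  have hvv : v₁ = v₂ := Real.injOn_sin ⟨hv₁.1.le, hv₁.2.le⟩ ⟨hv₂.1.le, hv₂.2.le⟩ hsinv
  subst hvv
  -- u equal
  have hSpos : 0 < Real.sin (τ₁ * Real.cos v₁) := Real.sin_pos_of_pos_of_lt_pi ha1.1 ha1.2
  have hcu : Real.cos u₁ = Real.cos u₂ := by
    have hne : Real.exp (τ₁ * Real.sin v₁) * Real.sin (τ₁ * Real.cos v₁) ≠ 0 :=
      (mul_pos hEpos hSpos).ne'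
    exact mul_left_cancel₀ hne h2
  have hsu : Real.sin u₁ = Real.sin u₂ := by
    have hne : Real.exp (τ₁ * Real.sin v₁) * Real.sin (τ₁ * Real.cos v₁) ≠ 0 :=
      (mul_pos hEpos hSpos).ne'
    exact mul_left_cancel₀ hne h3
  have hcos1 : Real.cos (u₁ - u₂) = 1 := by
    rw [Real.cos_sub, hcu, hsu]
    rw [← Real.sin_sq_add_cos_sq u₂]; ring
  have huu : u₁ = u₂ := by
    have := (Real.cos_eq_one_iff_of_lt_of_lt (x := u₁ - u₂) (by linarith [hu₁.1, hu₂.2])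
      (by linarith [hu₁.2, hu₂.1])).1 hcos1
    linarith
  rw [huu]


instance : (volume : Measure (ℝ × ℝ)).IsAddHaarMeasure := by
  rw [MeasureTheory.Measure.volume_eq_prod]; infer_instance

instance : (volume : Measure (ℝ × ℝ × ℝ)).IsAddHaarMeasure := by
  rw [MeasureTheory.Measure.volume_eq_prod]; infer_instance

/-- Theorem 2.4: the `S² × ℝ`-volume of the geodesic ball `B_ρ` of radius `0 < ρ < π`,
i.e. the Lebesgue integral of `(x² + y² + z²)^{-3/2}` over the image `B_ρ` of
`[0, ρ] × [−π/2, π/2] × (−π, π]` under the polar coordinate map, equals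
`2π ∫₀^ρ ∫_{−π/2}^{π/2} τ · sin(τ cos v) dv dτ`. -/
theorem ball_volume (ρ : ℝ) (h0 : 0 < ρ) (hπ : ρ < π) :
    (∫ q in Fpolar '' (Set.Icc 0 ρ ×ˢ Set.Icc (-(π / 2)) (π / 2) ×ˢ Set.Ioc (-π) π),
        (q.1 ^ 2 + q.2.1 ^ 2 + q.2.2 ^ 2) ^ (-(3 : ℝ) / 2)) =
      2 * π * ∫ τ in (0 : ℝ)..ρ, ∫ v in (-(π / 2))..(π / 2),
        τ * Real.sin (τ * Real.cos v) := by
  have hπpos : (0:ℝ) < π := Real.pi_pos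
  set K : Set (ℝ × ℝ × ℝ) := Set.Icc 0 ρ ×ˢ Set.Icc (-(π / 2)) (π / 2) ×ˢ Set.Ioc (-π) π
    with hK
  set s : Set (ℝ × ℝ × ℝ) := Set.Ioo 0 ρ ×ˢ Set.Ioo (-(π / 2)) (π / 2) ×ˢ Set.Ioo (-π) π
    with hs
  have hs_meas : MeasurableSet s :=
    (measurableSet_Ioo.prod (measurableSet_Ioo.prod measurableSet_Ioo))
  have hsK : s ⊆ K :=
    Set.prod_mono Set.Ioo_subset_Icc_self
      (Set.prod_mono Set.Ioo_subset_Icc_self Set.Ioo_subset_Ioc_self)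
  have hvolK : volume K = ENNReal.ofReal ρ * (ENNReal.ofReal π * ENNReal.ofReal (2*π)) := by
    rw [hK, MeasureTheory.Measure.volume_eq_prod, MeasureTheory.Measure.prod_prod,
      MeasureTheory.Measure.volume_eq_prod, MeasureTheory.Measure.prod_prod,
      Real.volume_Icc, Real.volume_Icc, Real.volume_Ioc]
    norm_num
    ring_nf
    rw [ENNReal.ofReal_mul (by positivity), ENNReal.ofReal_ofNat]; ring
  have hvols : volume s = ENNReal.ofReal ρ * (ENNReal.ofReal π * ENNReal.ofReal (2*π)) := by
    rw [hs, MeasureTheory.Measure.volume_eq_prod, MeasureTheory.Measure.prod_prod,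
      MeasureTheory.Measure.volume_eq_prod, MeasureTheory.Measure.prod_prod,
      Real.volume_Ioo, Real.volume_Ioo, Real.volume_Ioo]
    norm_num
    ring_nf
    rw [ENNReal.ofReal_mul (by positivity), ENNReal.ofReal_ofNat]; ring
  have hfin : volume s ≠ ⊤ := by rw [hvols]; finiteness
  have hKs_null : volume (K \ s) = 0 := by
    rw [measure_diff hsK hs_meas.nullMeasurableSet hfin, hvolK, hvols, tsub_self]
  have himg_null : volume (Fpolar '' (K \ s)) = 0 :=
    MeasureTheory.addHaar_image_eq_zero_of_differentiableOn_of_addHaar_eq_zero volume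
      (fun x _ => (hasFDerivAt_Fpolar x).differentiableAt.differentiableWithinAt) hKs_null
  have hae : Fpolar '' K =ᵐ[volume] Fpolar '' s := by
    rw [MeasureTheory.ae_eq_set]
    constructor
    · refine measure_mono_null ?_ himg_null
      rintro x ⟨⟨y, hyK, rfl⟩, hx⟩
      exact ⟨y, ⟨hyK, fun hys => hx ⟨y, hys, rfl⟩⟩, rfl⟩
    · rw [Set.diff_eq_empty.2 (Set.image_mono hsK)]
      exact measure_empty
  rw [MeasureTheory.setIntegral_congr_set hae,
    MeasureTheory.integral_image_eq_integral_abs_det_fderiv_smul volume hs_meas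
      (fun x _ => (hasFDerivAt_Fpolar x).hasFDerivWithinAt) (injOn_Fpolar hπ)]
  have hptwise : Set.EqOn
      (fun x => |(Fder x).det| •
        (((Fpolar x).1 ^ 2 + (Fpolar x).2.1 ^ 2 + (Fpolar x).2.2 ^ 2) ^ (-(3 : ℝ) / 2)))
      (fun p => p.1 * Real.sin (p.1 * Real.cos p.2.1)) s := by
    rintro ⟨τ, v, u⟩ ⟨hτ, hv, hu⟩
    simp only [Set.mem_Ioo] at hτ hv hu
    have hc : 0 < Real.cos v := Real.cos_pos_of_mem_Ioo ⟨hv.1, hv.2⟩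
    have ha : τ * Real.cos v ∈ Set.Ioo 0 π := by
      constructor
      · exact mul_pos hτ.1 hc
      · calc τ * Real.cos v ≤ τ * 1 := mul_le_mul_of_nonneg_left (Real.cos_le_one _) hτ.1.le
          _ < π := by linarith [hτ.2]
    have hS : 0 < Real.sin (τ * Real.cos v) := Real.sin_pos_of_pos_of_lt_pi ha.1 ha.2
    simp only [Fder_det, Fpolar_normsq, smul_eq_mul]
    have habs : |(-(τ * Real.exp (τ * Real.sin v) ^ 3 * Real.sin (τ * Real.cos v)))|
        = τ * Real.exp (τ * Real.sin v) ^ 3 * Real.sin (τ * Real.cos v) := by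
      rw [abs_neg, abs_of_nonneg]
      exact mul_nonneg (mul_nonneg hτ.1.le (by positivity)) hS.le
    have hrpow : Real.exp (2 * (τ * Real.sin v)) ^ (-(3:ℝ)/2)
        = Real.exp (-(3 * (τ * Real.sin v))) := by
      rw [Real.rpow_def_of_pos (Real.exp_pos _), Real.log_exp]
      congr 1
      ring
    show |(-(τ * Real.exp (τ * Real.sin v) ^ 3 * Real.sin (τ * Real.cos v)))| *
        Real.exp (2 * (τ * Real.sin v)) ^ (-(3:ℝ)/2) = τ * Real.sin (τ * Real.cos v)
    rw [habs, hrpow]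
    have hprod : Real.exp (τ * Real.sin v) ^ 3 * Real.exp (-(3 * (τ * Real.sin v))) = 1 := by
      have h3 : Real.exp (τ * Real.sin v) ^ 3 = Real.exp (3 * (τ * Real.sin v)) := by
        rw [← Real.exp_nat_mul]; norm_num
      rw [h3, ← Real.exp_add]
      simp
    linear_combination (τ * Real.sin (τ * Real.cos v)) * hprod
  rw [MeasureTheory.setIntegral_congr_fun hs_meas hptwise]
  -- Fubini
  have hcont : Continuous fun p : ℝ × ℝ × ℝ => p.1 * Real.sin (p.1 * Real.cos p.2.1) := by
    fun_prop
  have hint : IntegrableOn (fun p : ℝ × ℝ × ℝ => p.1 * Real.sin (p.1 * Real.cos p.2.1)) s := by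
    refine (hcont.continuousOn.integrableOn_compact ?_).mono_set
      (Set.prod_mono Set.Ioo_subset_Icc_self
        (Set.prod_mono Set.Ioo_subset_Icc_self Set.Ioo_subset_Icc_self))
    exact isCompact_Icc.prod (isCompact_Icc.prod isCompact_Icc)
  rw [hs]
  rw [show (volume : Measure (ℝ × ℝ × ℝ)) = (volume : Measure ℝ).prod volume from
    MeasureTheory.Measure.volume_eq_prod _ _]
  have hint' : IntegrableOn (fun p : ℝ × ℝ × ℝ => p.1 * Real.sin (p.1 * Real.cos p.2.1))
      (Set.Ioo 0 ρ ×ˢ Set.Ioo (-(π / 2)) (π / 2) ×ˢ Set.Ioo (-π) π)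
      ((volume : Measure ℝ).prod volume) := by
    rw [← MeasureTheory.Measure.volume_eq_prod]
    exact hint.mono_set (by rw [hs])
  rw [MeasureTheory.setIntegral_prod _ hint']
  have hinner : ∀ τ : ℝ, (∫ w in Set.Ioo (-(π / 2)) (π / 2) ×ˢ Set.Ioo (-π) π,
      τ * Real.sin (τ * Real.cos w.1)) =
      2 * π * ∫ v in Set.Ioo (-(π / 2)) (π / 2), τ * Real.sin (τ * Real.cos v) := by
    intro τ
    have hint2 : IntegrableOn (fun w : ℝ × ℝ => τ * Real.sin (τ * Real.cos w.1))
        (Set.Ioo (-(π / 2)) (π / 2) ×ˢ Set.Ioo (-π) π) := by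
      have c2 : Continuous fun w : ℝ × ℝ => τ * Real.sin (τ * Real.cos w.1) := by fun_prop
      exact (c2.continuousOn.integrableOn_compact
        (isCompact_Icc.prod isCompact_Icc)).mono_set
        (Set.prod_mono Set.Ioo_subset_Icc_self Set.Ioo_subset_Icc_self)
    rw [show (volume : Measure (ℝ × ℝ)) = (volume : Measure ℝ).prod volume from
      MeasureTheory.Measure.volume_eq_prod _ _]
    have hint2' : IntegrableOn (fun w : ℝ × ℝ => τ * Real.sin (τ * Real.cos w.1))
        (Set.Ioo (-(π / 2)) (π / 2) ×ˢ Set.Ioo (-π) π) ((volume : Measure ℝ).prod volume) := by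
      rw [← MeasureTheory.Measure.volume_eq_prod]; exact hint2
    rw [MeasureTheory.setIntegral_prod _ hint2']
    rw [show (∫ v in Set.Ioo (-(π / 2)) (π / 2), ∫ _ in Set.Ioo (-π) π,
        τ * Real.sin (τ * Real.cos v)) =
      ∫ v in Set.Ioo (-(π / 2)) (π / 2), (2 * π) * (τ * Real.sin (τ * Real.cos v)) from by
        apply MeasureTheory.setIntegral_congr_fun measurableSet_Ioo
        intro v _
        show (∫ _ in Set.Ioo (-π) π, τ * Real.sin (τ * Real.cos v))
          = 2 * π * (τ * Real.sin (τ * Real.cos v))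
        rw [MeasureTheory.setIntegral_const, measureReal_def, Real.volume_Ioo, smul_eq_mul]
        congr 1
        rw [ENNReal.toReal_ofReal (by linarith)]
        ring]
    rw [MeasureTheory.integral_const_mul]
  simp_rw [hinner]
  rw [MeasureTheory.integral_const_mul]
  congr 1
  rw [intervalIntegral.integral_of_le h0.le, MeasureTheory.integral_Ioc_eq_integral_Ioo]
  apply MeasureTheory.setIntegral_congr_fun measurableSet_Ioo
  intro τ _
  show (∫ v in Set.Ioo (-(π / 2)) (π / 2), τ * Real.sin (τ * Real.cos v))
    = ∫ v in (-(π / 2))..(π / 2), τ * Real.sin (τ * Real.cos v)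
  rw [intervalIntegral.integral_of_le (by linarith : -(π / 2) ≤ π / 2),
    MeasureTheory.integral_Ioc_eq_integral_Ioo]
end
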